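/- arXiv:2403.18053 — 2 statements merged into one kernel-verified Lean document; each statement's English description precedes it below -/
import Mathlib

section
/- Let δ > 0, let ω : ℝ³ → ℝ be measurable with ω ≥ c > 0 on B(0, δ), and let K = ∫_{B(0,δ)} ω(ξ)(ξ ⊗ ξ) dξ, which is symmetric and invertible. For any 3×3 matrices P (effective Piola stress) and Ḟ (rate of the deformation gradient), define the correspondence force state T(ξ) = ω(ξ) P K⁻¹ ξ and the bond velocity Ẏ(ξ) = Ḟ ξ. Then the nonlocal internal power equals the local one: ∫_{B(0,δ)} T(ξ) · (Ḟ ξ) dξ = P : Ḟ, where P : Ḟ = tr(Pᵀ Ḟ) is the Frobenius inner product. -/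
open MeasureTheory Matrix

attribute [local instance] Matrix.frobeniusNormedAddCommGroup Matrix.frobeniusNormedSpace
attribute [-instance] instTopologicalSpaceMatrix Matrix.instUniformSpace

lemma vmv_eq_sum (x y : Fin 3 → ℝ) :
    Matrix.vecMulVec x y
      = ∑ i : Fin 3, ∑ j : Fin 3, (x i * y j) • Matrix.single i j (1 : ℝ) := by
  ext a b
  simp [Matrix.vecMulVec_apply, Matrix.sum_apply, Matrix.single, Matrix.smul_apply,
    ite_and, Finset.sum_ite_eq', mul_comm]

lemma vmv_cont : Continuous (fun ξ : EuclideanSpace ℝ (Fin 3) =>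
    Matrix.vecMulVec (fun i => ξ i) (fun i => ξ i) : EuclideanSpace ℝ (Fin 3) →
      Matrix (Fin 3) (Fin 3) ℝ) := by
  simp_rw [vmv_eq_sum]
  refine continuous_finset_sum _ fun i _ => continuous_finset_sum _ fun j _ => ?_
  exact ((EuclideanSpace.proj i).continuous.mul (EuclideanSpace.proj j).continuous).smul
    continuous_const

lemma vmv_norm (ξ : EuclideanSpace ℝ (Fin 3)) :
    ‖(Matrix.vecMulVec (fun i => ξ i) (fun i => ξ i) : Matrix (Fin 3) (Fin 3) ℝ)‖
      = ‖ξ‖ ^ 2 := by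
  have h0 : (0:ℝ) ≤ ∑ i, ξ i ^ 2 := Finset.sum_nonneg fun i _ => sq_nonneg _
  have h1 : ‖(Matrix.vecMulVec (fun i => ξ i) (fun i => ξ i) : Matrix (Fin 3) (Fin 3) ℝ)‖
      = ∑ i, ξ i ^ 2 := by
    rw [Matrix.frobenius_norm_def]
    have h2 : (∑ i : Fin 3, ∑ j : Fin 3,
        ‖Matrix.vecMulVec (fun i => ξ i) (fun i => ξ i) i j‖ ^ (2:ℝ)) = (∑ i, ξ i ^ 2)^2 := by
      rw [sq, Finset.sum_mul_sum]
      refine Finset.sum_congr rfl fun i _ => Finset.sum_congr rfl fun j _ => ?_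
      rw [Matrix.vecMulVec_apply, show (2:ℝ) = ((2:ℕ):ℝ) by norm_num, Real.rpow_natCast,
        Real.norm_eq_abs, sq_abs, mul_pow]
    rw [h2, ← Real.sqrt_eq_rpow, Real.sqrt_sq h0]
  rw [h1, EuclideanSpace.norm_eq, Real.sq_sqrt]
  · exact Finset.sum_congr rfl fun i _ => by rw [Real.norm_eq_abs, sq_abs]
  · exact Finset.sum_nonneg fun i _ => sq_nonneg _

lemma dot_mulVec_eq_trace (v : Fin 3 → ℝ) (M : Matrix (Fin 3) (Fin 3) ℝ) :
    v ⬝ᵥ M.mulVec v = (Matrix.vecMulVec v v * M).trace := by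
  simp only [Matrix.trace, Matrix.diag, Matrix.mul_apply, Matrix.vecMulVec_apply,
    dotProduct, Matrix.mulVec, Finset.mul_sum]
  rw [Finset.sum_comm]
  exact Finset.sum_congr rfl fun i _ => Finset.sum_congr rfl fun j _ => by ring

lemma mulVec_dot_eq_trace (A B : Matrix (Fin 3) (Fin 3) ℝ) (x : Fin 3 → ℝ) :
    A.mulVec x ⬝ᵥ B.mulVec x = (Aᵀ * B * Matrix.vecMulVec x x).trace := by
  simp only [Matrix.trace, Matrix.diag, Matrix.mul_apply, Matrix.vecMulVec_apply,
    dotProduct, Matrix.mulVec, Matrix.transpose_apply, Finset.sum_mul, Finset.mul_sum]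
  simp only [Fin.sum_univ_succ, Fin.sum_univ_zero]
  ring

lemma trace_vmv_mul_vmv (v x : Fin 3 → ℝ) :
    (Matrix.vecMulVec v v * Matrix.vecMulVec x x).trace = (∑ i, v i * x i) ^ 2 := by
  simp only [Matrix.trace, Matrix.diag, Matrix.mul_apply, Matrix.vecMulVec_apply, sq,
    Finset.sum_mul, Finset.mul_sum]
  rw [Finset.sum_comm]
  exact Finset.sum_congr rfl fun i _ => Finset.sum_congr rfl fun j _ => by ring

noncomputable def traceMulCLM (C : Matrix (Fin 3) (Fin 3) ℝ) :
    Matrix (Fin 3) (Fin 3) ℝ →L[ℝ] ℝ :=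
  LinearMap.toContinuousLinearMap
    { toFun := fun M => (C * M).trace
      map_add' := by intro x y; simp [Matrix.mul_add]
      map_smul' := by intro r x; simp [Matrix.mul_smul] }

@[simp] lemma traceMulCLM_apply (C M : Matrix (Fin 3) (Fin 3) ℝ) :
    traceMulCLM C M = (C * M).trace := rfl

noncomputable def transposeCLM :
    Matrix (Fin 3) (Fin 3) ℝ →L[ℝ] Matrix (Fin 3) (Fin 3) ℝ :=
  LinearMap.toContinuousLinearMap
    { toFun := Matrix.transpose
      map_add' := Matrix.transpose_add
      map_smul' := Matrix.transpose_smul }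

@[simp] lemma transposeCLM_apply (M : Matrix (Fin 3) (Fin 3) ℝ) :
    transposeCLM M = Mᵀ := rfl

/-- **Constitutive correspondence principle: nonlocal internal power equals local power.**
For the correspondence force state `T(ξ) = ω(ξ) P K⁻¹ ξ` and a homogeneous bond
velocity `Ẏ(ξ) = Ḟ ξ`, one has
`∫_{B(0,δ)} T(ξ) · (Ḟ ξ) dξ = P : Ḟ = tr(Pᵀ Ḟ)`. -/
theorem correspondence_internal_power_eq_local
    (δ c : ℝ) (hδ : 0 < δ) (hc : 0 < c)
    (ω : EuclideanSpace ℝ (Fin 3) → ℝ)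
    (hω_meas : Measurable ω)
    (hω_int : IntegrableOn ω (Metric.ball (0 : EuclideanSpace ℝ (Fin 3)) δ))
    (hω_lb : ∀ ξ ∈ Metric.ball (0 : EuclideanSpace ℝ (Fin 3)) δ, c ≤ ω ξ)
    (K : Matrix (Fin 3) (Fin 3) ℝ)
    (hK : K = ∫ ξ in Metric.ball (0 : EuclideanSpace ℝ (Fin 3)) δ,
        ω ξ • Matrix.vecMulVec (fun i => ξ i) (fun i => ξ i))
    (P Fdot : Matrix (Fin 3) (Fin 3) ℝ)
    (T : EuclideanSpace ℝ (Fin 3) → (Fin 3 → ℝ))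
    (hT : ∀ ξ, T ξ = ω ξ • (P * K⁻¹).mulVec (fun i => ξ i)) :
    ∫ ξ in Metric.ball (0 : EuclideanSpace ℝ (Fin 3)) δ,
        T ξ ⬝ᵥ Fdot.mulVec (fun i => ξ i) = (Pᵀ * Fdot).trace := by
  set B := Metric.ball (0 : EuclideanSpace ℝ (Fin 3)) δ with hB
  set f : EuclideanSpace ℝ (Fin 3) → Matrix (Fin 3) (Fin 3) ℝ :=
    fun ξ => ω ξ • Matrix.vecMulVec (fun i => ξ i) (fun i => ξ i) with hf_def
  -- integrability of the matrix-valued integrand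
  have hfm : AEStronglyMeasurable f (volume.restrict B) :=
    (hω_meas.stronglyMeasurable.smul vmv_cont.stronglyMeasurable).aestronglyMeasurable
  have hf : IntegrableOn f B := by
    refine Integrable.mono' (g := fun ξ => ‖ω ξ‖ * δ ^ 2) (hω_int.norm.mul_const _) hfm ?_
    rw [ae_restrict_iff' measurableSet_ball]
    refine ae_of_all _ fun ξ hξ => ?_
    have hξδ : ‖ξ‖ < δ := by simpa using mem_ball_zero_iff.1 hξ
    calc ‖f ξ‖ = ‖ω ξ‖ * ‖ξ‖ ^ 2 := by rw [hf_def, norm_smul, vmv_norm]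
      _ ≤ ‖ω ξ‖ * δ ^ 2 := by
          refine mul_le_mul_of_nonneg_left ?_ (norm_nonneg _)
          exact pow_le_pow_left₀ (norm_nonneg _) hξδ.le 2
  have hcomm : ∀ C : Matrix (Fin 3) (Fin 3) ℝ,
      (C * K).trace = ∫ ξ in B, (C * f ξ).trace := by
    intro C
    have h := (traceMulCLM C).integral_comp_comm hf
    simp only [traceMulCLM_apply] at h
    rw [hK, ← h]
  have hKsymm : Kᵀ = K := by
    have h := transposeCLM.integral_comp_comm hf
    simp only [transposeCLM_apply] at h
    have h2 : ∀ ξ, (f ξ)ᵀ = f ξ := by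
      intro ξ
      rw [hf_def]
      ext a b
      simp [Matrix.transpose_apply, Matrix.vecMulVec_apply, mul_comm]
    calc Kᵀ = ∫ ξ in B, (f ξ)ᵀ := by rw [hK, ← h]
      _ = K := by simp_rw [h2, hK]
  have hKpd : K.PosDef := by
    rw [Matrix.posDef_iff_dotProduct_mulVec]
    constructor
    · show Kᴴ = K
      ext i j
      simpa [Matrix.conjTranspose_apply] using congrFun (congrFun hKsymm i) j
    · intro v hv
      have hsv : star v = v := by funext i; simp
      obtain ⟨i0, hi0⟩ := Function.ne_iff.1 hv
      -- the quadratic form as an integral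
      have hq : v ⬝ᵥ K *ᵥ v = ∫ ξ in B, ω ξ * (∑ i, v i * ξ i) ^ 2 := by
        rw [dot_mulVec_eq_trace, hcomm (Matrix.vecMulVec v v)]
        refine setIntegral_congr_fun measurableSet_ball fun ξ _ => ?_
        rw [hf_def]
        simp only [Matrix.mul_smul, Matrix.trace_smul, smul_eq_mul, trace_vmv_mul_vmv]
      rw [hsv, hq]
      set h : EuclideanSpace ℝ (Fin 3) → ℝ := fun ξ => ω ξ * (∑ i, v i * ξ i) ^ 2 with hh
      have hint : IntegrableOn h B := by
        have h3 := (traceMulCLM (Matrix.vecMulVec v v)).integrable_comp hf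
        refine h3.congr ?_
        refine ae_of_all _ fun ξ => ?_
        simp only [traceMulCLM_apply, hf_def, hh, Matrix.mul_smul, Matrix.trace_smul,
          smul_eq_mul, trace_vmv_mul_vmv]
      have hnn : 0 ≤ᵐ[volume.restrict B] h := by
        refine (ae_restrict_mem measurableSet_ball).mono fun ξ hξ => ?_
        exact mul_nonneg (hc.le.trans (hω_lb ξ hξ)) (sq_nonneg _)
      -- the kernel hyperplane
      let ℓ : EuclideanSpace ℝ (Fin 3) →ₗ[ℝ] ℝ :=
        { toFun := fun ξ => ∑ i, v i * ξ i
          map_add' := by intro x y; simp [mul_add, Finset.sum_add_distrib]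
          map_smul' := by intro r x; simp [Finset.mul_sum]; ring_nf; simp [mul_comm, mul_left_comm]
        }
      have hStop : LinearMap.ker ℓ ≠ ⊤ := by
        intro htop
        set w : EuclideanSpace ℝ (Fin 3) := (WithLp.equiv 2 (Fin 3 → ℝ)).symm v with hw
        have hmem : w ∈ LinearMap.ker ℓ := htop ▸ Submodule.mem_top
        have : ℓ w = ∑ i, v i * v i := by
          simp only [ℓ, LinearMap.coe_mk, AddHom.coe_mk]
          refine Finset.sum_congr rfl fun i _ => ?_
          rw [hw, WithLp.equiv_symm_apply]
        have hpos : 0 < ℓ w := by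
          rw [this]
          exact Finset.sum_pos' (fun j _ => mul_self_nonneg _)
            ⟨i0, Finset.mem_univ i0, mul_self_pos.2 (by simpa using hi0)⟩
        rw [LinearMap.mem_ker.1 hmem] at hpos
        exact lt_irrefl 0 hpos
      have hker0 : volume ((LinearMap.ker ℓ : Submodule ℝ (EuclideanSpace ℝ (Fin 3))) :
          Set (EuclideanSpace ℝ (Fin 3))) = 0 :=
        Measure.addHaar_submodule volume _ hStop
      have hsub : B \ (LinearMap.ker ℓ : Submodule ℝ (EuclideanSpace ℝ (Fin 3)))
          ⊆ Function.support h ∩ B := by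
        rintro ξ ⟨hξB, hξk⟩
        refine ⟨?_, hξB⟩
        have hω0 : 0 < ω ξ := hc.trans_le (hω_lb ξ hξB)
        have hd : (∑ i, v i * ξ i) ≠ 0 := by
          intro h0
          exact hξk (LinearMap.mem_ker.2 h0)
        exact mul_ne_zero (ne_of_gt hω0) (pow_ne_zero 2 hd)
      have hmeas_pos : 0 < volume (Function.support h ∩ B) := by
        refine lt_of_lt_of_le ?_ (measure_mono hsub)
        rw [measure_diff_null hker0]
        exact Metric.measure_ball_pos volume 0 hδ
      exact (setIntegral_pos_iff_support_of_nonneg_ae hnn hint).2 hmeas_pos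
  have hdet : IsUnit K.det := (Matrix.isUnit_iff_isUnit_det K).1 hKpd.isUnit
  have hKinv : K * K⁻¹ = 1 := Matrix.mul_nonsing_inv K hdet
  have hKinvT : K⁻¹ᵀ = K⁻¹ := by rw [Matrix.transpose_nonsing_inv, hKsymm]
  have hpt : (fun ξ : EuclideanSpace ℝ (Fin 3) => T ξ ⬝ᵥ Fdot.mulVec (fun i => ξ i))
      = fun ξ => ((P * K⁻¹)ᵀ * Fdot * f ξ).trace := by
    funext ξ
    rw [hT, smul_dotProduct, mulVec_dot_eq_trace, hf_def]
    simp only [smul_eq_mul, Matrix.mul_smul, Matrix.trace_smul]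
  rw [hpt, ← hcomm ((P * K⁻¹)ᵀ * Fdot)]
  rw [Matrix.transpose_mul, hKinvT, Matrix.trace_mul_comm, ← Matrix.mul_assoc,
    ← Matrix.mul_assoc, hKinv, Matrix.one_mul]
end

section
/- For every δ > 0, the iterated integral over all bonds of length at most δ that cross a unit-area plane—namely I(δ) = ∫_{z=0}^{δ} ∫_{ξ=z}^{δ} ∫_{φ=0}^{arccos(z/ξ)} ∫_{ψ=0}^{2π} ξ² sin φ dψ dφ dξ dz—equals π δ⁴ / 4. Consequently, if every such bond carries a constant bond energy density W, the total energy consumed per unit fracture area is W · π δ⁴ / 4, and this equals a prescribed critical energy release rate G_cr if and only if W = 4 G_cr / (π δ⁴). -/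
open Real

/-- **Critical bond energy density from the critical energy release rate.**
The volume integral over all bonds of length at most `δ` crossing a unit-area
plane equals `π δ⁴ / 4`; hence a constant bond energy density `W` consumes
`W · π δ⁴ / 4` per unit fracture area, which equals the critical energy release
rate `G_cr` if and only if `W = 4 G_cr / (π δ⁴)`. -/
theorem bond_breakage_energy_integral (δ : ℝ) (hδ : 0 < δ) :
    (∫ z in (0 : ℝ)..δ, ∫ ξ in z..δ, ∫ φ in (0 : ℝ)..(Real.arccos (z / ξ)),
        ∫ ψ in (0 : ℝ)..(2 * π), ξ ^ 2 * Real.sin φ) = π * δ ^ 4 / 4 ∧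
    ∀ W Gcr : ℝ, W * (π * δ ^ 4 / 4) = Gcr ↔ W = 4 * Gcr / (π * δ ^ 4) := by
  constructor
  · -- Step 1: inner triple integral for z ∈ (0, δ]
    have h1 : ∀ z ∈ Set.Ioc (0 : ℝ) δ,
        (∫ ξ in z..δ, ∫ φ in (0 : ℝ)..(Real.arccos (z / ξ)),
            ∫ ψ in (0 : ℝ)..(2 * π), ξ ^ 2 * Real.sin φ)
          = 2 * π * δ ^ 3 / 3 - π * δ ^ 2 * z + π / 3 * z ^ 3 := by
      intro z hz
      have hz0 : 0 < z := hz.1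
      have hzδ : z ≤ δ := hz.2
      have hξ : Set.EqOn
          (fun ξ => ∫ φ in (0 : ℝ)..(Real.arccos (z / ξ)),
              ∫ ψ in (0 : ℝ)..(2 * π), ξ ^ 2 * Real.sin φ)
          (fun ξ => 2 * π * ξ ^ 2 - 2 * π * z * ξ) (Set.uIcc z δ) := by
        intro ξ hmem
        rw [Set.uIcc_of_le hzδ] at hmem
        have hξ0 : 0 < ξ := lt_of_lt_of_le hz0 hmem.1
        have hx0 : (-1 : ℝ) ≤ z / ξ := le_trans (by norm_num) (div_nonneg hz0.le hξ0.le)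
        have hx1 : z / ξ ≤ 1 := (div_le_one hξ0).2 hmem.1
        have hψ : ∀ φ : ℝ, (∫ ψ in (0 : ℝ)..(2 * π), ξ ^ 2 * Real.sin φ)
            = (2 * π * ξ ^ 2) * Real.sin φ := by
          intro φ
          rw [intervalIntegral.integral_const, smul_eq_mul]; ring
        simp only [hψ]
        rw [intervalIntegral.integral_const_mul, integral_sin,
          Real.cos_zero, Real.cos_arccos hx0 hx1]
        field_simp
      rw [intervalIntegral.integral_congr hξ,
        intervalIntegral.integral_sub (Continuous.intervalIntegrable (by continuity) _ _)
          (Continuous.intervalIntegrable (by continuity) _ _),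
        intervalIntegral.integral_const_mul, intervalIntegral.integral_const_mul,
        integral_pow, integral_id]
      ring
    -- Step 2: rewrite the outer integrand a.e.
    have h2 : (∫ z in (0 : ℝ)..δ, ∫ ξ in z..δ,
          ∫ φ in (0 : ℝ)..(Real.arccos (z / ξ)),
            ∫ ψ in (0 : ℝ)..(2 * π), ξ ^ 2 * Real.sin φ)
        = ∫ z in (0 : ℝ)..δ, (2 * π * δ ^ 3 / 3 - π * δ ^ 2 * z + π / 3 * z ^ 3) := by
      apply intervalIntegral.integral_congr_ae
      filter_upwards with z hz
      rw [Set.uIoc_of_le hδ.le] at hz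
      exact h1 z hz
    rw [h2,
      intervalIntegral.integral_add (Continuous.intervalIntegrable (by continuity) _ _)
        (Continuous.intervalIntegrable (by continuity) _ _),
      intervalIntegral.integral_sub (Continuous.intervalIntegrable (by continuity) _ _)
        (Continuous.intervalIntegrable (by continuity) _ _),
      intervalIntegral.integral_const, intervalIntegral.integral_const_mul,
      intervalIntegral.integral_const_mul, integral_pow, integral_id, smul_eq_mul]
    ring
  · intro W Gcr
    have h4 : π * δ ^ 4 ≠ 0 := by positivity
    rw [eq_div_iff h4]
    constructor <;> intro h <;> linarith
end
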